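/- arXiv:0906.2614 — 4 statements merged into one kernel-verified Lean document; each statement's English description precedes it below -/
import Mathlib

section
/- There exists a single martingale m that wins against every 'biased' sequence, i.e., against every ω : ℕ → Bool such that for all n, the number of indices i < n with ω i = false is at least the number of indices i < n with ω i = true. -/
open Filter MeasureTheory Set
open scoped ENNReal

/-- The first `n` bits of `ω`, i.e. the list `[ω 0, …, ω (n-1)]`. -/
def prefixFn (ω : ℕ → Bool) (n : ℕ) : List Bool := List.ofFn fun i : Fin n => ω i

/-- `α` has limit frequency `p`: the fraction of `true`s among the first `N` terms
tends to `p` as `N → ∞`. -/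
def LimitFreq (α : ℕ → Bool) (p : ℝ) : Prop :=
  Tendsto (fun N => (((Finset.range N).filter fun i => α i = true).card : ℝ) / N)
    atTop (nhds p)

/-- The set of indices `i` such that the selection rule `s` selects the term `ω i`. -/
def SelectedIndices (s : List Bool → Bool) (ω : ℕ → Bool) : Set ℕ :=
  {i | s (prefixFn ω i) = true}

/-- The subsequence selected by `s` from `ω`: the selected terms, in increasing order of
index (meaningful when the selected index set is infinite). -/
noncomputable def SelectedSeq (s : List Bool → Bool) (ω : ℕ → Bool) : ℕ → Bool :=
  fun n => ω (Nat.nth (· ∈ SelectedIndices s ω) n)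

/-- Requirement II for the selection rule `s` with limit `p`: the subsequence selected by
`s` is finite or has limit frequency `p`. -/
def SatisfiesII (s : List Bool → Bool) (ω : ℕ → Bool) (p : ℝ) : Prop :=
  (SelectedIndices s ω).Finite ∨ LimitFreq (SelectedSeq s ω) p

/-- A (non-negative) martingale. -/
def IsMartingale (m : List Bool → ℝ) : Prop :=
  (∀ x, 0 ≤ m x) ∧ ∀ x, m x = (m (x ++ [false]) + m (x ++ [true])) / 2

/-- A (non-negative) supermartingale. -/
def IsSupermartingale (m : List Bool → ℝ) : Prop :=
  (∀ x, 0 ≤ m x) ∧ ∀ x, (m (x ++ [false]) + m (x ++ [true])) / 2 ≤ m x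

/-- `m` wins against `ω`: the values of `m` on the prefixes of `ω` are unbounded. -/
def Wins (m : List Bool → ℝ) (ω : ℕ → Bool) : Prop :=
  ∀ C : ℝ, ∃ n, C < m (prefixFn ω n)

/-- The cylinder of all infinite sequences extending the finite string `w`. -/
def cyl (w : List Bool) : Set (ℕ → Bool) := {ω | prefixFn ω w.length = w}

/-- `μ` is the uniform (fair-coin) measure on Cantor space, i.e. the infinite product
over `ℕ` of the uniform measure on `Bool`; it is characterized by its values on
cylinders: `μ (cyl w) = 2 ^ (- length w)`. -/
def IsUniformMeasure (μ : Measure (ℕ → Bool)) : Prop :=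
  ∀ w : List Bool, μ (cyl w) = ((2 : ℝ≥0∞) ^ w.length)⁻¹

/-- `X` is an effectively null set: some computable `g` produces, for every `k`, a
sequence of (optional) strings whose cylinders cover `X` and whose total measure is at
most `2^(-k)`. -/
def EffNull (X : Set (ℕ → Bool)) : Prop :=
  ∃ g : ℕ → ℕ → Option (List Bool), Computable₂ g ∧
    ∀ k : ℕ,
      (X ⊆ ⋃ n : ℕ, ⋃ w ∈ g k n, cyl w) ∧
      (∑' n : ℕ, ((g k n).elim 0 fun w => ((2 : ℝ≥0∞) ^ w.length)⁻¹)) ≤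
        ((2 : ℝ≥0∞) ^ k)⁻¹

/-- `ω` is Martin-Löf random: it belongs to no effectively null set. -/
def MLRandom (ω : ℕ → Bool) : Prop := ∀ X : Set (ℕ → Bool), EffNull X → ω ∉ X

/-- A canonical `Primcodable` structure on `ℚ`, via its canonical enumeration. -/
instance : Primcodable ℚ := Primcodable.ofEquiv ℕ (Denumerable.eqv ℚ)

/-- `f` is lower semicomputable: it is the pointwise supremum of a computable family of
rationals, nondecreasing in the second argument. -/
def LowerSemicomputableFn (f : List Bool → ℝ) : Prop :=
  ∃ g : List Bool → ℕ → ℚ, Computable₂ g ∧ (∀ x, Monotone fun n => g x n) ∧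
    ∀ x, f x = ⨆ n, ((g x n : ℝ))

/-- `f` is computable: some computable family of rationals approximates it within
`2^(-n)`. -/
def ComputableFn (f : List Bool → ℝ) : Prop :=
  ∃ g : List Bool → ℕ → ℚ, Computable₂ g ∧
    ∀ x n, |((g x n : ℝ)) - f x| ≤ (2 : ℝ) ^ (-(n : ℤ))


namespace AuxMartingaleBiased
open Finset

/-- all prefixes have #true ≤ #false -/
def good (x : List Bool) : Prop :=
  ∀ n, (x.take n).count true ≤ (x.take n).count false

instance : DecidablePred good := fun x =>
  haveI : Decidable (∀ n ∈ Finset.range (x.length + 1),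
      (x.take n).count true ≤ (x.take n).count false) := Finset.decidableDforallFinset
  decidable_of_iff (∀ n ∈ Finset.range (x.length + 1),
      (x.take n).count true ≤ (x.take n).count false) (by

    constructor
    · intro h n
      rcases le_or_gt n x.length with hn | hn
      · exact h n (Finset.mem_range.2 (by omega))
      · rw [List.take_of_length_le hn.le]
        have := h x.length (Finset.mem_range.2 (by omega))
        rwa [List.take_length] at this
    · intro h n _; exact h n)

lemma good_nil : good [] := by intro n; simp

lemma good_take {x : List Bool} (h : good x) (m : ℕ) : good (x.take m) := by
  intro n; rw [List.take_take]; exact h _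

lemma count_true_add_count_false (l : List Bool) : l.count true + l.count false = l.length := by
  induction l with
  | nil => simp
  | cons a l ih => cases a <;> simp [List.count_cons] <;> omega

lemma good_append_singleton (x : List Bool) (b : Bool) :
    good (x ++ [b]) ↔ good x ∧ (x ++ [b]).count true ≤ (x ++ [b]).count false := by
  constructor
  · intro h
    refine ⟨fun n => ?_, ?_⟩
    · rcases le_or_gt n x.length with hn | hn
      · have := h n; rwa [List.take_append_of_le_length hn] at this
      · rw [List.take_of_length_le hn.le]
        have := h x.length
        rwa [List.take_append_of_le_length le_rfl, List.take_length] at this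
    · have := h (x.length + 1)
      rwa [List.take_of_length_le (by simp)] at this
  · rintro ⟨h1, h2⟩ n
    rcases le_or_gt n x.length with hn | hn
    · rw [List.take_append_of_le_length hn]; exact h1 n
    · rw [List.take_of_length_le (by simp; omega)]; exact h2

lemma good_append_false {x : List Bool} (h : good x) : good (x ++ [false]) := by
  rw [good_append_singleton]
  refine ⟨h, ?_⟩
  have := h x.length
  rw [List.take_length] at this
  simp [List.count_append]
  omega

lemma good_replicate_false (n : ℕ) : good (List.replicate n false) := by
  intro m
  rw [List.take_replicate]
  simp [List.count_replicate]
/-- auxiliary counting function with fuel -/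
def gNAux (N : ℕ) : ℕ → List Bool → ℕ
  | 0, x => if good (x.take N) then 1 else 0
  | L + 1, x => gNAux N L (x ++ [false]) + gNAux N L (x ++ [true])

/-- number of good full extensions of `x` to length `N` -/
def gN (N : ℕ) (x : List Bool) : ℕ := gNAux N (N - x.length) x

lemma gN_stopped {N : ℕ} {x : List Bool} (h : N ≤ x.length) :
    gN N x = if good (x.take N) then 1 else 0 := by
  have : N - x.length = 0 := by omega
  rw [gN, this, gNAux]

lemma gN_split {N : ℕ} {x : List Bool} (h : x.length < N) :
    gN N x = gN N (x ++ [false]) + gN N (x ++ [true]) := by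
  have h0 : ∀ b : Bool, N - (x ++ [b]).length = N - x.length - 1 := by
    intro b; simp; omega
  have h1 : N - x.length = (N - x.length - 1) + 1 := by omega
  rw [gN, gN, gN, h0, h0, h1, gNAux]
  simp

lemma gN_append_le (N : ℕ) (x : List Bool) (b : Bool) : gN N (x ++ [b]) ≤ gN N x := by
  rcases le_or_gt N x.length with h | h
  · rw [gN_stopped h, gN_stopped (le_trans h (by simp)),
      List.take_append_of_le_length h]
  · rw [gN_split h]
    cases b <;> omega

lemma gN_le_nil (N : ℕ) (x : List Bool) : gN N x ≤ gN N [] := by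
  induction x using List.reverseRecOn with
  | nil => exact le_rfl
  | append_singleton l b ih => exact (gN_append_le N l b).trans ih

lemma gN_good_eq_one {N : ℕ} {x : List Bool} (hlen : x.length = N) (hg : good x) :
    gN N x = 1 := by
  rw [gN_stopped hlen.ge, if_pos]
  rw [← hlen, List.take_length]; exact hg

lemma gN_stable {N : ℕ} {x : List Bool} (h : N ≤ x.length) (b : Bool) :
    gN N (x ++ [b]) = gN N x := by
  rw [gN_stopped h, gN_stopped (le_trans h (by simp)), List.take_append_of_le_length h]
open Finset

/-- snoc equivalence -/
def snocEquivBool (L : ℕ) : ((Fin L → Bool) × Bool) ≃ (Fin (L + 1) → Bool) where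
  toFun p := Fin.snoc p.1 p.2
  invFun z := (Fin.init z, z (Fin.last L))
  left_inv p := by simp
  right_inv z := by simp

lemma sum_snoc_bool {M : Type*} [AddCommMonoid M] (L : ℕ) (F : (Fin (L + 1) → Bool) → M) :
    ∑ z : Fin (L + 1) → Bool, F z
      = ∑ y : Fin L → Bool, (F (Fin.snoc y false) + F (Fin.snoc y true)) := by
  rw [← Equiv.sum_comp (snocEquivBool L) F, Fintype.sum_prod_type]
  refine Finset.sum_congr rfl fun y _ => ?_
  rw [Fintype.sum_bool]
  simp [snocEquivBool, add_comm]

lemma ofFn_snoc (L : ℕ) (y : Fin L → Bool) (b : Bool) :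
    List.ofFn (Fin.snoc y b : Fin (L+1) → Bool) = List.ofFn y ++ [b] := by
  rw [List.ofFn_succ']
  simp [List.concat_eq_append]

lemma count_ofFn {n : ℕ} (f : Fin n → Bool) (b : Bool) :
    (List.ofFn f).count b = (univ.filter fun i => f i = b).card := by
  induction n with
  | zero => simp
  | succ n ih =>
    rw [List.ofFn_succ, List.count_cons, Finset.card_filter, Fin.sum_univ_succ]
    rw [ih (fun i => f i.succ), Finset.card_filter]
    cases hb : f 0 <;> cases b <;> simp [hb, add_comm]

def consEquivBool (L : ℕ) : (Bool × (Fin L → Bool)) ≃ (Fin (L + 1) → Bool) where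
  toFun p := Fin.cons p.1 p.2
  invFun z := (z 0, Fin.tail z)
  left_inv p := by simp
  right_inv z := by simp

lemma sum_cons_bool {M : Type*} [AddCommMonoid M] (L : ℕ) (F : (Fin (L + 1) → Bool) → M) :
    ∑ z : Fin (L + 1) → Bool, F z
      = ∑ y : Fin L → Bool, (F (Fin.cons false y) + F (Fin.cons true y)) := by
  rw [← Equiv.sum_comp (consEquivBool L) F, Fintype.sum_prod_type]
  rw [Fintype.sum_bool, ← Finset.sum_add_distrib]
  refine Finset.sum_congr rfl fun y _ => ?_
  simp [consEquivBool, add_comm]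

lemma card_filter_cons_split (L : ℕ) (P : (Fin (L + 1) → Bool) → Prop) [DecidablePred P] :
    (univ.filter P).card
      = (univ.filter fun y : Fin L → Bool => P (Fin.cons false y)).card
        + (univ.filter fun y : Fin L → Bool => P (Fin.cons true y)).card := by
  rw [Finset.card_filter, Finset.card_filter, Finset.card_filter, sum_cons_bool,
    Finset.sum_add_distrib]

lemma ofFn_cons (L : ℕ) (b : Bool) (y : Fin L → Bool) :
    List.ofFn (Fin.cons b y : Fin (L+1) → Bool) = b :: List.ofFn y := by
  rw [List.ofFn_succ]
  simp

lemma gNAux_count (L : ℕ) : ∀ (N : ℕ) (x : List Bool), N ≤ x.length + L →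
    gNAux N L x = (univ.filter fun y : Fin L → Bool => good ((x ++ List.ofFn y).take N)).card := by
  induction L with
  | zero =>
    intro N x h
    rw [gNAux]
    by_cases hg : good (x.take N)
    · rw [if_pos hg, Finset.filter_true_of_mem, Finset.card_univ]
      · simp [Fintype.card_fun]
      · intro y _; simpa using hg
    · rw [if_neg hg, Finset.filter_false_of_mem, Finset.card_empty]
      intro y _; simpa using hg
  | succ L ih =>
    intro N x h
    rw [gNAux, card_filter_cons_split]
    rw [ih N (x ++ [false]) (by simp; omega), ih N (x ++ [true]) (by simp; omega)]
    congr 1 <;>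
    · apply congrArg
      apply Finset.filter_congr
      intro y _
      rw [ofFn_cons, List.append_assoc, List.singleton_append]

lemma gN_nil_count (n : ℕ) :
    gN n [] = (univ.filter fun y : Fin n → Bool => good (List.ofFn y)).card := by
  rw [gN]
  simp only [List.length_nil, Nat.sub_zero]
  rw [gNAux_count n n [] (by simp)]
  apply congrArg
  apply Finset.filter_congr
  intro y _
  rw [List.nil_append, List.take_of_length_le (by simp)]

lemma one_le_gN_nil (N : ℕ) : 1 ≤ gN N [] := by
  rw [gN_nil_count]
  apply Finset.card_pos.mpr
  refine ⟨fun _ => false, Finset.mem_filter.mpr ⟨Finset.mem_univ _, ?_⟩⟩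
  rw [List.ofFn_const]
  exact good_replicate_false N

/-- the stopped gambler's-ruin martingale, as a nonnegative integer -/
def Wt (l : List Bool) : ℕ := if good l then l.count false + 1 - l.count true else 0

lemma good_count {l : List Bool} (h : good l) : l.count true ≤ l.count false := by
  have := h l.length; rwa [List.take_length] at this

lemma Wt_pair (l : List Bool) : Wt (l ++ [false]) + Wt (l ++ [true]) = 2 * Wt l := by
  by_cases hg : good l
  · have hc := good_count hg
    have hgf : good (l ++ [false]) := good_append_false hg
    have hcf : (l ++ [false]).count false = l.count false + 1 := by simp [List.count_append]
    have hct : (l ++ [false]).count true = l.count true := by simp [List.count_append]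
    have hcf' : (l ++ [true]).count false = l.count false := by simp [List.count_append]
    have hct' : (l ++ [true]).count true = l.count true + 1 := by simp [List.count_append]
    by_cases ht : l.count true < l.count false
    · have hgt : good (l ++ [true]) := by
        rw [good_append_singleton]; exact ⟨hg, by omega⟩
      rw [Wt, Wt, Wt, if_pos hg, if_pos hgf, if_pos hgt, hcf, hct, hcf', hct']
      omega
    · have hgt : ¬ good (l ++ [true]) := by
        rw [good_append_singleton]; push_neg; intro _; omega
      rw [Wt, Wt, Wt, if_pos hg, if_pos hgf, if_neg hgt, hcf, hct]
      omega
  · have h0 : ∀ b, ¬ good (l ++ [b]) := by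
      intro b hb
      exact hg ((good_append_singleton l b).mp hb).1
    rw [Wt, Wt, Wt, if_neg hg, if_neg (h0 false), if_neg (h0 true)]

lemma Wt_sum (n : ℕ) : ∑ x : Fin n → Bool, Wt (List.ofFn x) = 2 ^ n := by
  induction n with
  | zero => simp [Wt, good_nil]
  | succ n ih =>
    rw [sum_snoc_bool]
    have : ∀ y : Fin n → Bool,
        Wt (List.ofFn (Fin.snoc y false : Fin (n+1) → Bool))
          + Wt (List.ofFn (Fin.snoc y true : Fin (n+1) → Bool)) = 2 * Wt (List.ofFn y) := by
      intro y
      rw [ofFn_snoc, ofFn_snoc, Wt_pair]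
    rw [Finset.sum_congr rfl fun y _ => this y, ← Finset.mul_sum, ih]
    ring

lemma markov_bound (n X : ℕ) :
    (X + 1) * ((univ.filter fun x : Fin n → Bool =>
        good (List.ofFn x) ∧ 2 * (List.ofFn x).count true + X ≤ n).card) ≤ 2 ^ n := by
  set s := univ.filter fun x : Fin n → Bool =>
        good (List.ofFn x) ∧ 2 * (List.ofFn x).count true + X ≤ n with hs
  have h1 : s.card • (X + 1) ≤ ∑ x ∈ s, Wt (List.ofFn x) := by
    apply Finset.card_nsmul_le_sum
    intro x hx
    rw [hs, Finset.mem_filter] at hx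
    obtain ⟨-, hg, hle⟩ := hx
    have hlen := count_true_add_count_false (List.ofFn x)
    rw [List.length_ofFn] at hlen
    have hc := good_count hg
    rw [Wt, if_pos hg]
    omega
  have h2 : ∑ x ∈ s, Wt (List.ofFn x) ≤ ∑ x : Fin n → Bool, Wt (List.ofFn x) := by
    apply Finset.sum_le_sum_of_subset (Finset.filter_subset _ _)
  rw [Wt_sum] at h2
  calc (X + 1) * s.card = s.card • (X + 1) := by rw [smul_eq_mul]; ring
  _ ≤ 2 ^ n := h1.trans h2

lemma count_fiber_bound (n t : ℕ) (s : Finset (Fin n → Bool))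
    (hsub : ∀ x ∈ s, (List.ofFn x).count true = t) : s.card ≤ n.choose t := by
  have : s.card ≤ (Finset.powersetCard t (univ : Finset (Fin n))).card := by
    apply Finset.card_le_card_of_injOn (fun x => univ.filter fun i => x i = true)
    · intro x hx
      rw [Finset.mem_coe, Finset.mem_powersetCard_univ, ← count_ofFn, hsub x hx]
    · intro x _ y _ hxy
      funext i
      have : (i ∈ univ.filter fun j => x j = true) ↔ (i ∈ univ.filter fun j => y j = true) :=
        iff_of_eq (congrArg (fun s => i ∈ s) hxy)
      simp only [Finset.mem_filter, Finset.mem_univ, true_and] at this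
      cases hx : x i <;> cases hy : y i <;> simp [hx, hy] at this ⊢ <;> tauto
  rwa [Finset.card_powersetCard, Finset.card_univ, Fintype.card_fin] at this

lemma middle_bound (n X : ℕ) :
    ((univ.filter fun x : Fin n → Bool =>
        good (List.ofFn x) ∧ n < 2 * (List.ofFn x).count true + X).card)
      ≤ X * n.choose (n / 2) := by
  set s := univ.filter fun x : Fin n → Bool =>
        good (List.ofFn x) ∧ n < 2 * (List.ofFn x).count true + X with hs
  set T := (Finset.range (n+1)).filter (fun t => n < 2 * t + X ∧ 2 * t ≤ n) with hT
  have hmap : ∀ x ∈ s, (List.ofFn x).count true ∈ T := by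
    intro x hx
    rw [hs, Finset.mem_filter] at hx
    have hle : (List.ofFn x).count true ≤ n := by
      have := (List.ofFn x).count_le_length (a := true)
      simpa using this
    rw [hT, Finset.mem_filter, Finset.mem_range]
    have hg := good_count hx.2.1
    have hlen := count_true_add_count_false (List.ofFn x)
    rw [List.length_ofFn] at hlen
    exact ⟨by omega, hx.2.2, by omega⟩
  rw [Finset.card_eq_sum_card_fiberwise hmap]
  have hfib : ∀ t ∈ T, (s.filter fun x => (List.ofFn x).count true = t).card
      ≤ n.choose (n / 2) := by
    intro t _
    refine le_trans (count_fiber_bound n t _ ?_) (Nat.choose_le_middle t n)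
    intro x hx
    exact (Finset.mem_filter.mp hx).2
  calc ∑ t ∈ T, (s.filter fun x => (List.ofFn x).count true = t).card
      ≤ ∑ _t ∈ T, n.choose (n / 2) := Finset.sum_le_sum hfib
  _ = T.card * n.choose (n / 2) := by rw [Finset.sum_const, smul_eq_mul]
  _ ≤ X * n.choose (n / 2) := by
      apply Nat.mul_le_mul_right
      have : T.card ≤ (Finset.Ico (n + 1 - X) (n + 1)).card := by
        apply Finset.card_le_card_of_injOn (fun t => 2 * t)
        · intro t ht
          rw [hT, Finset.mem_coe, Finset.mem_filter, Finset.mem_range] at ht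
          simp only [Finset.mem_coe, Finset.mem_Ico]
          omega
        · intro a _ b _ h
          dsimp only at h
          omega
      rw [Nat.card_Ico] at this
      omega

lemma gN_nil_bound (n X : ℕ) :
    (X + 1) * gN n [] ≤ (X + 1) * (X * n.choose (n / 2)) + 2 ^ n := by
  have hsplit : gN n []
      ≤ ((univ.filter fun x : Fin n → Bool =>
          good (List.ofFn x) ∧ n < 2 * (List.ofFn x).count true + X).card)
        + ((univ.filter fun x : Fin n → Bool =>
          good (List.ofFn x) ∧ 2 * (List.ofFn x).count true + X ≤ n).card) := by
    rw [gN_nil_count]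
    refine le_trans (Finset.card_le_card ?_) (Finset.card_union_le _ _)
    intro x hx
    rw [Finset.mem_filter] at hx
    rcases le_or_gt (2 * (List.ofFn x).count true + X) n with h | h
    · exact Finset.mem_union_right _ (Finset.mem_filter.mpr ⟨hx.1, hx.2, h⟩)
    · exact Finset.mem_union_left _ (Finset.mem_filter.mpr ⟨hx.1, hx.2, h⟩)
  calc (X + 1) * gN n [] ≤ (X + 1) * _ := Nat.mul_le_mul_left _ hsplit
  _ ≤ (X + 1) * (X * n.choose (n / 2)) + 2 ^ n := by
      rw [Nat.mul_add]
      exact Nat.add_le_add (Nat.mul_le_mul_left _ (middle_bound n X)) (markov_bound n X)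

lemma centralBinom_sq_bound (M : ℕ) : (2 * M + 1) * (Nat.centralBinom M) ^ 2 ≤ 16 ^ M := by
  induction M with
  | zero => simp [Nat.centralBinom]
  | succ M ih =>
    have key := Nat.succ_mul_centralBinom_succ M
    have hpos : 0 < (M + 1) ^ 2 := by positivity
    refine Nat.le_of_mul_le_mul_left ?_ hpos
    have h1 : (M + 1) ^ 2 * ((2 * (M + 1) + 1) * Nat.centralBinom (M + 1) ^ 2)
        = (2 * M + 3) * ((M + 1) * Nat.centralBinom (M + 1)) ^ 2 := by ring
    rw [h1, key]
    have h2 : (2 * M + 3) * (2 * (2 * M + 1) * Nat.centralBinom M) ^ 2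
        = (4 * (2 * M + 1) * (2 * M + 3)) * ((2 * M + 1) * Nat.centralBinom M ^ 2) := by ring
    rw [h2]
    calc (4 * (2 * M + 1) * (2 * M + 3)) * ((2 * M + 1) * Nat.centralBinom M ^ 2)
        ≤ (4 * (2 * M + 1) * (2 * M + 3)) * 16 ^ M := Nat.mul_le_mul_left _ ih
    _ ≤ ((M + 1) ^ 2 * 16) * 16 ^ M := by
        apply Nat.mul_le_mul_right
        nlinarith
    _ = (M + 1) ^ 2 * 16 ^ (M + 1) := by ring

lemma exists_good_count_small (k : ℕ) : ∃ N : ℕ, gN N [] * 4 ^ k ≤ 2 ^ N := by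
  set X := 4 ^ (k + 1) with hX
  set M := (X + 1) ^ 4 with hM
  refine ⟨2 * M, ?_⟩
  have hA := gN_nil_bound (2 * M) X
  have hchoose : (2 * M).choose (2 * M / 2) = Nat.centralBinom M := by
    rw [Nat.centralBinom]
    congr 1
    omega
  rw [hchoose] at hA
  have h2M : (2 : ℕ) ^ (2 * M) = 4 ^ M := by
    rw [show (4:ℕ) = 2 ^ 2 by norm_num, ← Nat.pow_mul, Nat.mul_comm]
  rw [h2M] at hA
  -- cb * (X+1) * X ≤ 3 * 4^M
  have hcb : Nat.centralBinom M * ((X + 1) * X) ≤ 4 ^ M := by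
    have h1 : (Nat.centralBinom M * ((X + 1) * X)) ^ 2 ≤ (4 ^ M) ^ 2 := by
      have h2 : ((X + 1) * X) ^ 2 ≤ 2 * M + 1 := by
        have : (X + 1) * X ≤ (X + 1) ^ 2 := by nlinarith
        calc ((X + 1) * X) ^ 2 ≤ ((X + 1) ^ 2) ^ 2 := Nat.pow_le_pow_left this 2
        _ = (X + 1) ^ 4 := by ring
        _ ≤ 2 * M + 1 := by rw [hM]; omega
      calc (Nat.centralBinom M * ((X + 1) * X)) ^ 2
          = ((X + 1) * X) ^ 2 * Nat.centralBinom M ^ 2 := by ring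
      _ ≤ (2 * M + 1) * Nat.centralBinom M ^ 2 := Nat.mul_le_mul_right _ h2
      _ ≤ 16 ^ M := centralBinom_sq_bound M
      _ = (4 ^ M) ^ 2 := by
          rw [show (16:ℕ) = 4 ^ 2 by norm_num, ← Nat.pow_mul, Nat.mul_comm, Nat.pow_mul]
    exact (pow_le_pow_iff_left₀ (Nat.zero_le _) (Nat.zero_le _) two_ne_zero).mp h1
  rw [h2M]
  -- target : gN (2*M) [] * 4 ^ k ≤ 4 ^ M
  have h4 : 4 ^ k * (X + 1) = 4 ^ k * X + 4 ^ k := by ring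
  -- (X+1) * gN ≤ (X+1) * X * cb + 4^M
  -- multiply by 4^k : ...
  have step : (X + 1) * (gN (2 * M) [] * 4 ^ k) ≤ (X + 1) * 4 ^ M := by
    calc (X + 1) * (gN (2 * M) [] * 4 ^ k) = ((X + 1) * gN (2 * M) []) * 4 ^ k := by ring
    _ ≤ ((X + 1) * (X * Nat.centralBinom M) + 4 ^ M) * 4 ^ k := Nat.mul_le_mul_right _ hA
    _ = (Nat.centralBinom M * ((X + 1) * X)) * 4 ^ k + 4 ^ M * 4 ^ k := by ring
    _ ≤ 4 ^ M * 4 ^ k + 4 ^ M * 4 ^ k := by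
        apply Nat.add_le_add_right
        exact Nat.mul_le_mul_right _ hcb
    _ = 2 * 4 ^ k * 4 ^ M := by ring
    _ ≤ (X + 1) * 4 ^ M := by
        apply Nat.mul_le_mul_right
        rw [hX]
        have : (4:ℕ) ^ (k+1) = 4 * 4 ^ k := by ring
        omega
  exact Nat.le_of_mul_le_mul_left step (by positivity)


lemma prefixFn_take (ω : ℕ → Bool) (N n : ℕ) :
    (prefixFn ω N).take n = prefixFn ω (min n N) := by
  apply List.ext_getElem
  · simp [prefixFn]
  · intro i h1 h2
    simp [prefixFn, List.getElem_take]

lemma prefixFn_count (ω : ℕ → Bool) (n : ℕ) (b : Bool) :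
    (prefixFn ω n).count b = ((Finset.range n).filter fun i => ω i = b).card := by
  rw [prefixFn, count_ofFn]
  rw [Finset.card_filter, Finset.card_filter]
  exact Fin.sum_univ_eq_sum_range (fun i => if ω i = b then 1 else 0) n

lemma good_prefixFn (ω : ℕ → Bool)
    (hb : ∀ n : ℕ, ((Finset.range n).filter fun i => ω i = true).card ≤
      ((Finset.range n).filter fun i => ω i = false).card) (N : ℕ) :
    good (prefixFn ω N) := by
  intro n
  rw [prefixFn_take, prefixFn_count, prefixFn_count]
  exact hb _

noncomputable def NNk : ℕ → ℕ := fun k => (exists_good_count_small k).choose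

lemma NNk_spec (k : ℕ) : gN (NNk k) [] * 4 ^ k ≤ 2 ^ (NNk k) :=
  (exists_good_count_small k).choose_spec

noncomputable def trm (k : ℕ) (x : List Bool) : ℝ :=
  (gN (NNk k) x : ℝ) / (gN (NNk k) [] : ℝ)
    * (2 : ℝ) ^ (((min x.length (NNk k) : ℕ) : ℤ) - (k : ℤ))

lemma gN_nil_pos (k : ℕ) : (0 : ℝ) < (gN (NNk k) [] : ℝ) := by
  have := one_le_gN_nil (NNk k)
  exact_mod_cast Nat.lt_of_lt_of_le Nat.zero_lt_one this

lemma trm_nonneg (k : ℕ) (x : List Bool) : 0 ≤ trm k x := by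
  apply mul_nonneg
  · exact div_nonneg (Nat.cast_nonneg _) (Nat.cast_nonneg _)
  · positivity

lemma trm_le (k : ℕ) (x : List Bool) : trm k x ≤ 2 ^ x.length * (1/2) ^ k := by
  rw [trm]
  have h1 : (gN (NNk k) x : ℝ) / (gN (NNk k) [] : ℝ) ≤ 1 := by
    rw [div_le_one (gN_nil_pos k)]
    exact_mod_cast gN_le_nil (NNk k) x
  have h2 : (2 : ℝ) ^ (((min x.length (NNk k) : ℕ) : ℤ) - (k : ℤ))
      ≤ 2 ^ x.length * (1/2) ^ k := by
    have : (((min x.length (NNk k) : ℕ) : ℤ) - (k : ℤ)) ≤ (x.length : ℤ) - (k : ℤ) := by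
      have := min_le_left x.length (NNk k)
      omega
    calc (2 : ℝ) ^ (((min x.length (NNk k) : ℕ) : ℤ) - (k : ℤ))
        ≤ 2 ^ ((x.length : ℤ) - (k : ℤ)) := by
          apply zpow_le_zpow_right₀ (by norm_num) this
    _ = 2 ^ x.length * (1/2) ^ k := by
        rw [zpow_sub₀ (by norm_num : (2:ℝ) ≠ 0), zpow_natCast, zpow_natCast]
        rw [div_eq_mul_inv, one_div, inv_pow]
  calc trm k x ≤ 1 * ((2:ℝ) ^ (((min x.length (NNk k) : ℕ) : ℤ) - (k : ℤ))) := by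
        rw [trm] at *
        apply mul_le_mul_of_nonneg_right h1 (by positivity)
  _ = (2:ℝ) ^ (((min x.length (NNk k) : ℕ) : ℤ) - (k : ℤ)) := one_mul _
  _ ≤ 2 ^ x.length * (1/2) ^ k := h2

lemma trm_summable (x : List Bool) : Summable fun k => trm k x := by
  apply Summable.of_nonneg_of_le (fun k => trm_nonneg k x) (fun k => trm_le k x)
  exact (summable_geometric_two).mul_left _

lemma trm_pair (k : ℕ) (x : List Bool) :
    trm k (x ++ [false]) + trm k (x ++ [true]) = 2 * trm k x := by
  have hlen : ∀ b : Bool, (x ++ [b]).length = x.length + 1 := by simp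
  rcases lt_or_ge x.length (NNk k) with h | h
  · have hmin : (min x.length (NNk k)) = x.length := by omega
    have hmin' : ∀ b : Bool, (min (x ++ [b]).length (NNk k) : ℕ) = x.length + 1 := by
      intro b; rw [hlen]; omega
    rw [trm, trm, trm, hmin, hmin' false, hmin' true]
    have hsplit := gN_split (N := NNk k) (x := x) h
    have hz : (2:ℝ) ^ (((x.length : ℤ) + 1) - (k : ℤ))
        = 2 * (2:ℝ) ^ ((x.length : ℤ) - (k : ℤ)) := by
      rw [show ((x.length : ℤ) + 1) - (k : ℤ) = ((x.length : ℤ) - (k : ℤ)) + 1 by ring,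
        zpow_add_one₀ (by norm_num : (2:ℝ) ≠ 0)]
      ring
    push_cast [hlen, hsplit]
    rw [hz]
    ring
  · have hmin : (min x.length (NNk k)) = NNk k := by omega
    have hmin' : ∀ b : Bool, (min (x ++ [b]).length (NNk k) : ℕ) = NNk k := by
      intro b; rw [hlen]; omega
    rw [trm, trm, trm, hmin, hmin' false, hmin' true,
      gN_stable h false, gN_stable h true]
    ring

noncomputable def mart (x : List Bool) : ℝ := ∑' k, trm k x

lemma mart_nonneg (x : List Bool) : 0 ≤ mart x :=
  tsum_nonneg (fun k => trm_nonneg k x)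

lemma mart_avg (x : List Bool) :
    mart x = (mart (x ++ [false]) + mart (x ++ [true])) / 2 := by
  have h : mart (x ++ [false]) + mart (x ++ [true]) = 2 * mart x := by
    rw [mart, mart, ← Summable.tsum_add (trm_summable _) (trm_summable _)]
    rw [mart, ← tsum_mul_left]
    exact tsum_congr fun k => trm_pair k x
  rw [h]; ring

lemma mart_wins (ω : ℕ → Bool)
    (hb : ∀ n : ℕ, ((Finset.range n).filter fun i => ω i = true).card ≤
      ((Finset.range n).filter fun i => ω i = false).card)
    (C : ℝ) : ∃ n, C < mart (prefixFn ω n) := by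
  obtain ⟨k, hk⟩ := pow_unbounded_of_one_lt C (one_lt_two : (1:ℝ) < 2)
  refine ⟨NNk k, ?_⟩
  have hxlen : (prefixFn ω (NNk k)).length = NNk k := by simp [prefixFn]
  have hgood : good (prefixFn ω (NNk k)) := good_prefixFn ω hb (NNk k)
  have hone : gN (NNk k) (prefixFn ω (NNk k)) = 1 := gN_good_eq_one hxlen hgood
  have hmin : min (prefixFn ω (NNk k)).length (NNk k) = NNk k := by omega
  have htrm : trm k (prefixFn ω (NNk k))
      = (1 / (gN (NNk k) [] : ℝ)) * 2 ^ ((NNk k : ℤ) - (k : ℤ)) := by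
    rw [trm, hone, hmin]
    norm_num
  have hA := gN_nil_pos k
  have hcast : (gN (NNk k) [] : ℝ) * 4 ^ k ≤ 2 ^ (NNk k) := by exact_mod_cast NNk_spec k
  have hstep : (2:ℝ) ^ k ≤ trm k (prefixFn ω (NNk k)) := by
    rw [htrm, zpow_sub₀ (by norm_num : (2:ℝ) ≠ 0), zpow_natCast, zpow_natCast]
    rw [one_div, ← div_eq_inv_mul, le_div_iff₀ hA, le_div_iff₀ (by positivity : (0:ℝ) < 2 ^ k)]
    calc (2:ℝ) ^ k * (gN (NNk k) [] : ℝ) * 2 ^ k = (gN (NNk k) [] : ℝ) * 4 ^ k := by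
          rw [show (4:ℝ) = 2 * 2 by norm_num, mul_pow]; ring
    _ ≤ 2 ^ (NNk k) := hcast
  have hle : trm k (prefixFn ω (NNk k)) ≤ mart (prefixFn ω (NNk k)) :=
    Summable.le_tsum (trm_summable _) k (fun j _ => trm_nonneg j _)
  calc C < 2 ^ k := hk
  _ ≤ trm k (prefixFn ω (NNk k)) := hstep
  _ ≤ mart (prefixFn ω (NNk k)) := hle

end AuxMartingaleBiased

/-- There is a single martingale winning against every biased sequence, i.e. every
sequence each of whose prefixes has at least as many `false`s (zeros) as `true`s
(ones). -/
theorem martingale_against_biased :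
    ∃ m : List Bool → ℝ, IsMartingale m ∧
      ∀ ω : ℕ → Bool,
        (∀ n : ℕ, ((Finset.range n).filter fun i => ω i = true).card ≤
          ((Finset.range n).filter fun i => ω i = false).card) →
        Wins m ω := by
  refine ⟨AuxMartingaleBiased.mart, ⟨AuxMartingaleBiased.mart_nonneg, fun x => AuxMartingaleBiased.mart_avg x⟩, ?_⟩
  intro ω hb C
  exact AuxMartingaleBiased.mart_wins ω hb C
end

section
/- Nonexistence of collectives with respect to all selection rules: for every sequence ω : ℕ → Bool that has limit frequency p with 0 < p < 1, there exists a selection rule s whose value depends only on the length of its argument such that the subsequence selected by s from ω is infinite and has limit frequency 1 (hence different from p). -/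
open Filter MeasureTheory Set
open scoped ENNReal

/-- **Nonexistence of collectives w.r.t. all selection rules.** For every sequence with
limit frequency `p ∈ (0,1)` there is a selection rule, depending only on the length of
its argument, selecting an infinite subsequence with limit frequency `1`. -/
theorem no_collective_for_all_rules (ω : ℕ → Bool) (p : ℝ) (hp0 : 0 < p) (hp1 : p < 1)
    (hω : LimitFreq ω p) :
    ∃ s : List Bool → Bool,
      (∀ x y : List Bool, x.length = y.length → s x = s y) ∧
      (SelectedIndices s ω).Infinite ∧ LimitFreq (SelectedSeq s ω) 1 := by
  classical
  refine ⟨fun x => ω x.length, fun x y h => congrArg ω h, ?_⟩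
  have hset : SelectedIndices (fun x => ω x.length) ω = {i | ω i = true} := by
    ext i
    simp [SelectedIndices, prefixFn]
  have hinf : ({i | ω i = true} : Set ℕ).Infinite := by
    intro hfin
    have hC : ∀ N, ((Finset.range N).filter fun i => ω i = true) ⊆ hfin.toFinset := by
      intro N i hi
      simp only [Finset.mem_filter] at hi
      simpa [Set.Finite.mem_toFinset] using hi.2
    have h0 : Tendsto (fun N => (((Finset.range N).filter fun i => ω i = true).card : ℝ) / N)
        atTop (nhds 0) := by
      have h1 : Tendsto (fun N : ℕ => (hfin.toFinset.card : ℝ) / N) atTop (nhds 0) :=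
        tendsto_const_div_atTop_nhds_zero_nat _
      refine squeeze_zero (fun N => by positivity) (fun N => by gcongr; exact hC N) h1
    exact absurd (tendsto_nhds_unique hω h0) (by linarith)
  have hinfS : (SelectedIndices (fun x => ω x.length) ω).Infinite := by
    rw [hset]; exact hinf
  refine ⟨hinfS, ?_⟩
  have hmem : ∀ n, SelectedSeq (fun x => ω x.length) ω n = true := by
    intro n
    have h := Nat.nth_mem_of_infinite (p := (· ∈ SelectedIndices (fun x => ω x.length) ω))
      hinfS n
    simpa [SelectedSeq, SelectedIndices, prefixFn] using h
  have heq : (fun N => (((Finset.range N).filter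
      fun i => SelectedSeq (fun x => ω x.length) ω i = true).card : ℝ) / N)
      =ᶠ[atTop] fun _ => (1 : ℝ) := by
    filter_upwards [eventually_ge_atTop 1] with N hN
    rw [Finset.filter_true_of_mem (fun i _ => hmem i), Finset.card_range, div_self]
    exact_mod_cast Nat.pos_of_ne_zero (by omega) |>.ne'
  exact Tendsto.congr' heq.symm tendsto_const_nhds
end

section
/- Strong law of large numbers for selected subsequences: for every selection rule s and every real p with 0 < p < 1, the set of sequences ω : ℕ → Bool for which the subsequence selected by s from ω is infinite but does not have limit frequency p is a null set for the Bernoulli(p) product measure on ℕ → Bool. -/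
open Filter MeasureTheory Set
open scoped ENNReal

/-- `μ` is the Bernoulli(`p`) product measure on Cantor space: the infinite product over
`ℕ` of the measure on `Bool` giving `true` probability `p` and `false` probability
`1 - p`; it is characterized by its values on cylinders. -/
def IsBernoulliMeasure (p : ℝ) (μ : Measure (ℕ → Bool)) : Prop :=
  ∀ w : List Bool,
    μ (cyl w) =
      (w.map fun b => if b = true then ENNReal.ofReal p else ENNReal.ofReal (1 - p)).prod

namespace SLLNAux

variable (s : List Bool → Bool) (p : ℝ)

/-- number of selected positions in a word -/
def selC (w : List Bool) : ℕ :=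
  ((Finset.range w.length).filter fun i => s (w.take i) = true).card

/-- selected positions, stopped after `N` selections -/
def selF (N : ℕ) (w : List Bool) : Finset ℕ :=
  (Finset.range w.length).filter fun i => s (w.take i) = true ∧ selC s (w.take i) < N

def cN (N : ℕ) (w : List Bool) : ℕ := (selF s N w).card

def tN (N : ℕ) (w : List Bool) : ℕ :=
  ((selF s N w).filter fun i => w.getD i false = true).card

noncomputable def mart (l : ℝ) (N : ℕ) (w : List Bool) : ℝ≥0∞ :=
  ENNReal.ofReal (Real.exp (l * ((tN s N w : ℝ) - p * (cN s N w : ℝ))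
    - 3/2 * l^2 * (cN s N w : ℝ)))

noncomputable def nu (w : List Bool) : ℝ≥0∞ :=
  (w.map fun b => if b = true then ENNReal.ofReal p else ENNReal.ofReal (1 - p)).prod

lemma selF_subset (N : ℕ) (w : List Bool) :
    selF s N w ⊆ (Finset.range w.length).filter fun i => s (w.take i) = true :=
  by intro i hi
     simp only [selF, Finset.mem_filter] at hi ⊢
     exact ⟨hi.1, hi.2.1⟩

lemma cN_le_selC (N : ℕ) (w : List Bool) : cN s N w ≤ selC s w :=
  Finset.card_le_card (selF_subset s N w)

lemma selF_append (N : ℕ) (w : List Bool) (b : Bool) :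
    selF s N (w ++ [b]) =
      if s w = true ∧ selC s w < N then insert w.length (selF s N w) else selF s N w := by
  unfold selF
  have hlen : (w ++ [b]).length = w.length + 1 := by simp
  rw [hlen, Finset.range_add_one, Finset.filter_insert]
  have htake : ∀ i ∈ Finset.range w.length, (w ++ [b]).take i = w.take i := by
    intro i hi
    exact List.take_append_of_le_length (le_of_lt (Finset.mem_range.mp hi))
  have hw : (w ++ [b]).take w.length = w := List.take_left (l₁ := w) (l₂ := [b])
  have hfilter :
      ((Finset.range w.length).filter fun i =>
        s ((w ++ [b]).take i) = true ∧ selC s ((w ++ [b]).take i) < N) = selF s N w := by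
    unfold selF
    apply Finset.filter_congr
    intro i hi
    simp [htake i hi]
  rw [hw, hfilter]
  rfl

end SLLNAux

namespace SLLNAux

variable (s : List Bool → Bool) (p : ℝ)

lemma len_notin_selF (N : ℕ) (w : List Bool) : w.length ∉ selF s N w := by
  intro h
  have := Finset.mem_range.mp (Finset.mem_filter.mp h).1
  omega

lemma cN_append_active (N : ℕ) (w : List Bool) (b : Bool)
    (h : s w = true ∧ selC s w < N) :
    cN s N (w ++ [b]) = cN s N w + 1 := by
  unfold cN
  rw [selF_append, if_pos h, Finset.card_insert_of_notMem (len_notin_selF s N w)]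

lemma cN_append_inactive (N : ℕ) (w : List Bool) (b : Bool)
    (h : ¬(s w = true ∧ selC s w < N)) :
    cN s N (w ++ [b]) = cN s N w := by
  unfold cN
  rw [selF_append, if_neg h]

lemma tN_filter_congr (N : ℕ) (w : List Bool) (b : Bool) :
    ((selF s N w).filter fun i => (w ++ [b]).getD i false = true)
      = (selF s N w).filter fun i => w.getD i false = true := by
  apply Finset.filter_congr
  intro i hi
  have hi' : i < w.length := Finset.mem_range.mp (Finset.mem_filter.mp hi).1
  rw [List.getD_append _ _ _ _ hi']

lemma tN_append_active (N : ℕ) (w : List Bool) (b : Bool)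
    (h : s w = true ∧ selC s w < N) :
    tN s N (w ++ [b]) = tN s N w + (if b = true then 1 else 0) := by
  unfold tN
  rw [selF_append, if_pos h, Finset.filter_insert]
  have hb : (w ++ [b]).getD w.length false = b := by
    rw [List.getD_append_right _ _ _ _ le_rfl]
    simp
  rw [hb, tN_filter_congr]
  by_cases hbb : b = true
  · rw [if_pos hbb, if_pos hbb, Finset.card_insert_of_notMem]
    intro hmem
    exact len_notin_selF s N w (Finset.mem_filter.mp hmem).1
  · rw [if_neg hbb, if_neg hbb]
    simp

lemma tN_append_inactive (N : ℕ) (w : List Bool) (b : Bool)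
    (h : ¬(s w = true ∧ selC s w < N)) :
    tN s N (w ++ [b]) = tN s N w := by
  unfold tN
  rw [selF_append, if_neg h, tN_filter_congr]

lemma cN_nil (N : ℕ) : cN s N [] = 0 := by simp [cN, selF]

lemma tN_nil (N : ℕ) : tN s N [] = 0 := by simp [tN, cN_nil, selF]

end SLLNAux

namespace SLLNAux

variable (s : List Bool → Bool)

lemma key_ineq {p l : ℝ} (hp0 : 0 < p) (hp1 : p < 1) (hl : |l| ≤ 1) :
    (1 - p) * Real.exp (l * ((0:ℝ) - p) - 3/2 * l^2)
      + p * Real.exp (l * ((1:ℝ) - p) - 3/2 * l^2) ≤ 1 := by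
  have hp0' : (0:ℝ) ≤ p := hp0.le
  have hp1' : p ≤ 1 := hp1.le
  have hineq : ∀ x : ℝ, |x| ≤ 1 → Real.exp x ≤ 1 + x + 3/4 * x^2 := by
    intro x hx
    have h := Real.exp_bound hx (n := 2) (by norm_num)
    have hsum : ∑ m ∈ Finset.range 2, x ^ m / m.factorial = 1 + x := by
      simp [Finset.sum_range_succ]
    rw [hsum] at h
    have h24 : ((Nat.succ 2 : ℝ)) / ((Nat.factorial 2 : ℝ) * (2:ℕ)) = 3/4 := by
      norm_num [Nat.factorial]
    rw [h24] at h
    have habs := (abs_le.mp h).2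
    have hx2 : |x| ^ 2 = x ^ 2 := sq_abs x
    nlinarith [habs, hx2]
  have h1 : Real.exp (l * ((0:ℝ) - p)) ≤ 1 + l * (0 - p) + 3/4 * (l * (0 - p))^2 := by
    apply hineq
    rw [abs_mul]
    have : |(0:ℝ) - p| = p := by rw [abs_of_nonpos (by linarith)]; ring
    rw [this]
    calc |l| * p ≤ 1 * 1 := by
          apply mul_le_mul hl hp1' hp0' zero_le_one
      _ = 1 := by ring
  have h2 : Real.exp (l * ((1:ℝ) - p)) ≤ 1 + l * (1 - p) + 3/4 * (l * (1 - p))^2 := by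
    apply hineq
    rw [abs_mul]
    have : |(1:ℝ) - p| = 1 - p := abs_of_nonneg (by linarith)
    rw [this]
    calc |l| * (1 - p) ≤ 1 * 1 := by
          apply mul_le_mul hl (by linarith) (by linarith) zero_le_one
      _ = 1 := by ring
  have h3 : 1 + 3/2 * l^2 ≤ Real.exp (3/2 * l^2) := by
    have := Real.add_one_le_exp (3/2 * l^2)
    linarith
  have hpos : (0:ℝ) < Real.exp (3/2 * l^2) := Real.exp_pos _
  have key : (1 - p) * Real.exp (l * ((0:ℝ) - p)) + p * Real.exp (l * ((1:ℝ) - p))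
      ≤ Real.exp (3/2 * l^2) := by
    have e1 : (1 - p) * Real.exp (l * ((0:ℝ) - p))
        ≤ (1 - p) * (1 + l * (0 - p) + 3/4 * (l * (0 - p))^2) :=
      mul_le_mul_of_nonneg_left h1 (by linarith)
    have e2 : p * Real.exp (l * ((1:ℝ) - p))
        ≤ p * (1 + l * (1 - p) + 3/4 * (l * (1 - p))^2) :=
      mul_le_mul_of_nonneg_left h2 hp0'
    nlinarith [sq_nonneg l, mul_nonneg (mul_nonneg hp0' (by linarith : (0:ℝ) ≤ 1 - p)) (sq_nonneg l)]
  have hrw : ∀ x : ℝ, Real.exp (x - 3/2 * l^2) = Real.exp x / Real.exp (3/2 * l^2) := by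
    intro x; rw [Real.exp_sub]
  rw [hrw, hrw]
  have hring : (1 - p) * (Real.exp (l * ((0:ℝ) - p)) / Real.exp (3/2 * l^2))
      + p * (Real.exp (l * ((1:ℝ) - p)) / Real.exp (3/2 * l^2))
      = ((1 - p) * Real.exp (l * ((0:ℝ) - p)) + p * Real.exp (l * ((1:ℝ) - p)))
        / Real.exp (3/2 * l^2) := by ring
  rw [hring, div_le_one hpos]
  exact key

end SLLNAux

namespace SLLNAux

variable (s : List Bool → Bool) (p : ℝ)

lemma nu_append (w : List Bool) (b : Bool) :
    nu p (w ++ [b]) = nu p w * (if b = true then ENNReal.ofReal p else ENNReal.ofReal (1 - p)) := by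
  simp [nu]

lemma nu_nil : nu p [] = 1 := by simp [nu]

lemma ofFn_snoc {n : ℕ} (v : Fin n → Bool) (b : Bool) :
    List.ofFn (Fin.snoc v b : Fin (n+1) → Bool) = List.ofFn v ++ [b] := by
  rw [List.ofFn_succ']
  simp [List.concat_eq_append]

noncomputable def EE (F : List Bool → ℝ≥0∞) (n : ℕ) : ℝ≥0∞ :=
  ∑ v : Fin n → Bool, nu p (List.ofFn v) * F (List.ofFn v)

lemma EE_zero (F : List Bool → ℝ≥0∞) : EE p F 0 = F [] := by
  haveI : Unique (Fin 0 → Bool) :=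
    ⟨⟨fun i => i.elim0⟩, fun v => funext fun i => i.elim0⟩
  rw [EE, Fintype.sum_unique]
  simp [nu]

lemma EE_succ (F : List Bool → ℝ≥0∞) (n : ℕ) :
    EE p F (n+1) = ∑ v : Fin n → Bool, nu p (List.ofFn v) *
      (ENNReal.ofReal (1-p) * F (List.ofFn v ++ [false])
        + ENNReal.ofReal p * F (List.ofFn v ++ [true])) := by
  rw [EE, ← Equiv.sum_comp (Fin.snocEquiv (fun _ => Bool))
    (fun v => nu p (List.ofFn v) * F (List.ofFn v)), Fintype.sum_prod_type]
  rw [Finset.sum_comm]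
  apply Finset.sum_congr rfl
  intro v _
  have hs : ∀ b : Bool, (Fin.snocEquiv (fun _ => Bool)) (b, v) = Fin.snoc v b := by
    intro b; rfl
  rw [Fintype.sum_bool]
  rw [hs, hs, ofFn_snoc, ofFn_snoc, nu_append, nu_append]
  simp only [if_true, Bool.false_eq_true, if_false]
  ring

end SLLNAux

namespace SLLNAux

variable (s : List Bool → Bool)

lemma mart_step {p : ℝ} (hp0 : 0 < p) (hp1 : p < 1) {l : ℝ} (hl : |l| ≤ 1)
    (N : ℕ) (w : List Bool) :
    ENNReal.ofReal (1-p) * mart s p l N (w ++ [false])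
      + ENNReal.ofReal p * mart s p l N (w ++ [true]) ≤ mart s p l N w := by
  by_cases hact : s w = true ∧ selC s w < N
  · -- active step
    have hmart : ∀ b : Bool, mart s p l N (w ++ [b])
        = mart s p l N w * ENNReal.ofReal
            (Real.exp (l * ((if b = true then (1:ℝ) else 0) - p) - 3/2 * l^2)) := by
      intro b
      rw [mart, mart, cN_append_active s N w b hact, tN_append_active s N w b hact]
      rw [← ENNReal.ofReal_mul (Real.exp_nonneg _), ← Real.exp_add]
      congr 1
      push_cast
      by_cases hb : b = true <;> simp [hb] <;> ring
    rw [hmart, hmart]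
    simp only [Bool.false_eq_true, if_false, if_true]
    have hcomb : ENNReal.ofReal (1-p) * ENNReal.ofReal (Real.exp (l * ((0:ℝ) - p) - 3/2 * l^2))
        + ENNReal.ofReal p * ENNReal.ofReal (Real.exp (l * ((1:ℝ) - p) - 3/2 * l^2)) ≤ 1 := by
      rw [← ENNReal.ofReal_mul (by linarith : (0:ℝ) ≤ 1 - p), ← ENNReal.ofReal_mul hp0.le,
        ← ENNReal.ofReal_add (mul_nonneg (by linarith) (Real.exp_nonneg _))
          (mul_nonneg hp0.le (Real.exp_nonneg _))]
      exact ENNReal.ofReal_le_one.mpr (key_ineq hp0 hp1 hl)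
    calc ENNReal.ofReal (1-p) *
          (mart s p l N w * ENNReal.ofReal (Real.exp (l * ((0:ℝ) - p) - 3/2 * l^2)))
        + ENNReal.ofReal p *
          (mart s p l N w * ENNReal.ofReal (Real.exp (l * ((1:ℝ) - p) - 3/2 * l^2)))
        = mart s p l N w *
          (ENNReal.ofReal (1-p) * ENNReal.ofReal (Real.exp (l * ((0:ℝ) - p) - 3/2 * l^2))
            + ENNReal.ofReal p * ENNReal.ofReal (Real.exp (l * ((1:ℝ) - p) - 3/2 * l^2))) := by
          ring
      _ ≤ mart s p l N w * 1 := mul_le_mul_right hcomb _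
      _ = mart s p l N w := mul_one _
  · have hmart : ∀ b : Bool, mart s p l N (w ++ [b]) = mart s p l N w := by
      intro b
      rw [mart, mart, cN_append_inactive s N w b hact, tN_append_inactive s N w b hact]
    rw [hmart, hmart, ← add_mul]
    rw [← ENNReal.ofReal_add (by linarith) hp0.le]
    norm_num

end SLLNAux

namespace SLLNAux

variable (s : List Bool → Bool)

lemma mart_nil (p l : ℝ) (N : ℕ) : mart s p l N [] = 1 := by
  rw [mart, cN_nil, tN_nil]
  norm_num

lemma EE_mart_le_one {p : ℝ} (hp0 : 0 < p) (hp1 : p < 1) {l : ℝ} (hl : |l| ≤ 1)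
    (N : ℕ) : ∀ n, EE p (mart s p l N) n ≤ 1 := by
  intro n
  induction n with
  | zero => rw [EE_zero, mart_nil]
  | succ n ih =>
    rw [EE_succ]
    refine le_trans (le_trans (Finset.sum_le_sum fun v _ => ?_) le_rfl) ih
    exact mul_le_mul_right (mart_step s hp0 hp1 hl N (List.ofFn v)) _

end SLLNAux

namespace SLLNAux

variable (s : List Bool → Bool)

lemma mem_cyl_prefix (ω : ℕ → Bool) (n : ℕ) : ω ∈ cyl (prefixFn ω n) := by
  simp [cyl, prefixFn]

lemma measure_mart_ge {p : ℝ} {μ : Measure (ℕ → Bool)} (hμ : IsBernoulliMeasure p μ)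
    (hp0 : 0 < p) (hp1 : p < 1) {l : ℝ} (hl : |l| ≤ 1) (N n : ℕ) (a : ℝ) :
    μ {ω | ENNReal.ofReal (Real.exp a) ≤ mart s p l N (prefixFn ω n)}
      ≤ ENNReal.ofReal (Real.exp (-a)) := by
  classical
  set A := Finset.univ.filter
    (fun v : Fin n → Bool => ENNReal.ofReal (Real.exp a) ≤ mart s p l N (List.ofFn v)) with hA
  have hsub : {ω | ENNReal.ofReal (Real.exp a) ≤ mart s p l N (prefixFn ω n)}
      ⊆ ⋃ v ∈ A, cyl (List.ofFn v) := by
    intro ω hω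
    have hv : (fun i : Fin n => ω i) ∈ A :=
      Finset.mem_filter.mpr ⟨Finset.mem_univ _, hω⟩
    exact Set.mem_biUnion hv (mem_cyl_prefix ω n)
  calc μ {ω | ENNReal.ofReal (Real.exp a) ≤ mart s p l N (prefixFn ω n)}
      ≤ μ (⋃ v ∈ A, cyl (List.ofFn v)) := measure_mono hsub
    _ ≤ ∑ v ∈ A, μ (cyl (List.ofFn v)) := measure_biUnion_finset_le A _
    _ = ∑ v ∈ A, nu p (List.ofFn v) := Finset.sum_congr rfl fun v _ => hμ (List.ofFn v)
    _ ≤ ∑ v ∈ A, ENNReal.ofReal (Real.exp (-a))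
          * (nu p (List.ofFn v) * mart s p l N (List.ofFn v)) := by
        refine Finset.sum_le_sum fun v hv => ?_
        have hv' := (Finset.mem_filter.mp hv).2
        calc nu p (List.ofFn v)
            = ENNReal.ofReal (Real.exp (-a))
              * (nu p (List.ofFn v) * ENNReal.ofReal (Real.exp a)) := by
              rw [mul_comm (nu p (List.ofFn v)), ← mul_assoc,
                ← ENNReal.ofReal_mul (Real.exp_nonneg _), ← Real.exp_add]
              simp
          _ ≤ ENNReal.ofReal (Real.exp (-a))
              * (nu p (List.ofFn v) * mart s p l N (List.ofFn v)) :=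
              mul_le_mul_right (mul_le_mul_right hv' _) _
    _ = ENNReal.ofReal (Real.exp (-a))
          * ∑ v ∈ A, nu p (List.ofFn v) * mart s p l N (List.ofFn v) := by
        rw [Finset.mul_sum]
    _ ≤ ENNReal.ofReal (Real.exp (-a)) * EE p (mart s p l N) n := by
        refine mul_le_mul_right ?_ _
        exact Finset.sum_le_sum_of_subset (Finset.filter_subset _ _)
    _ ≤ ENNReal.ofReal (Real.exp (-a)) * 1 :=
        mul_le_mul_right (EE_mart_le_one s hp0 hp1 hl N n) _
    _ = ENNReal.ofReal (Real.exp (-a)) := mul_one _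

end SLLNAux

namespace SLLNAux

variable (s : List Bool → Bool)

lemma prefix_take (ω : ℕ → Bool) {i n : ℕ} (h : i ≤ n) :
    (prefixFn ω n).take i = prefixFn ω i := by
  apply List.ext_getElem
  · simp [prefixFn]; omega
  · intro j h1 h2
    simp [prefixFn]

lemma prefix_getD (ω : ℕ → Bool) {i n : ℕ} (h : i < n) :
    (prefixFn ω n).getD i false = ω i := by
  rw [List.getD_eq_getElem _ _ (by simp [prefixFn]; omega)]
  simp [prefixFn]

lemma selC_prefix (ω : ℕ → Bool) (n : ℕ) :
    selC s (prefixFn ω n) = Nat.count (fun i => s (prefixFn ω i) = true) n := by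
  rw [Nat.count_eq_card_filter_range]
  unfold selC
  have hl : (prefixFn ω n).length = n := by simp [prefixFn]
  rw [hl]
  apply congrArg
  apply Finset.filter_congr
  intro i hi
  rw [prefix_take ω (le_of_lt (Finset.mem_range.mp hi))]

lemma selF_prefix_full (ω : ℕ → Bool) {N n : ℕ}
    (hcnt : Nat.count (fun i => s (prefixFn ω i) = true) n = N) :
    selF s N (prefixFn ω n)
      = (Finset.range n).filter (fun i => s (prefixFn ω i) = true) := by
  unfold selF
  have hl : (prefixFn ω n).length = n := by simp [prefixFn]
  rw [hl]
  apply Finset.filter_congr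
  intro i hi
  have hi' : i < n := Finset.mem_range.mp hi
  rw [prefix_take ω (le_of_lt hi'), selC_prefix s ω i]
  constructor
  · tauto
  · intro hPi
    refine ⟨hPi, ?_⟩
    have h1 : Nat.count (fun i => s (prefixFn ω i) = true) (i+1)
        = Nat.count (fun i => s (prefixFn ω i) = true) i + 1 := by
      rw [Nat.count_succ, if_pos hPi]
    have h2 : Nat.count (fun i => s (prefixFn ω i) = true) (i+1)
        ≤ Nat.count (fun i => s (prefixFn ω i) = true) n :=
      Nat.count_monotone _ hi'
    omega

lemma bridge (ω : ℕ → Bool)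
    (hinf : {i | s (prefixFn ω i) = true}.Infinite) {N : ℕ} (hN : 1 ≤ N) :
    ∃ n, cN s N (prefixFn ω n) = N ∧
      (tN s N (prefixFn ω n)
        = ((Finset.range N).filter fun k => SelectedSeq s ω k = true).card) := by
  classical
  set P : ℕ → Prop := fun i => s (prefixFn ω i) = true with hP
  have hinf' : (setOf P).Infinite := hinf
  set n : ℕ := Nat.nth P (N-1) + 1 with hn
  have hcnt : Nat.count P n = N := by
    rw [hn, Nat.count_nth_succ_of_infinite hinf']
    omega
  have hself := selF_prefix_full s ω hcnt
  refine ⟨n, ?_, ?_⟩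
  · rw [cN, hself, ← Nat.count_eq_card_filter_range, hcnt]
  · rw [tN, hself, Finset.filter_filter]
    have hgetD : ((Finset.range n).filter fun i => P i ∧ (prefixFn ω n).getD i false = true)
        = (Finset.range n).filter fun i => P i ∧ ω i = true := by
      apply Finset.filter_congr
      intro i hi
      rw [prefix_getD ω (Finset.mem_range.mp hi)]
    rw [hgetD]
    have hseq : ∀ k, SelectedSeq s ω k = ω (Nat.nth P k) := fun k => rfl
    symm
    apply Finset.card_bij (fun k _ => Nat.nth P k)
    · intro k hk
      obtain ⟨hk1, hk2⟩ := Finset.mem_filter.mp hk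
      have hklt : k < N := Finset.mem_range.mp hk1
      refine Finset.mem_filter.mpr ⟨Finset.mem_range.mpr ?_, ?_, ?_⟩
      · have : Nat.nth P k ≤ Nat.nth P (N-1) :=
          (Nat.nth_le_nth hinf').mpr (by omega)
        omega
      · exact Nat.nth_mem_of_infinite hinf' k
      · rw [← hseq k]; exact hk2
    · intro k1 hk1 k2 hk2 heq
      exact Nat.nth_injective hinf' heq
    · intro b hb
      obtain ⟨hb1, hb2, hb3⟩ := Finset.mem_filter.mp hb
      have hbn : b < n := Finset.mem_range.mp hb1
      refine ⟨Nat.count P b, ?_, Nat.nth_count hb2⟩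
      refine Finset.mem_filter.mpr ⟨Finset.mem_range.mpr ?_, ?_⟩
      · have h1 : Nat.count P (b+1) = Nat.count P b + 1 := by
          rw [Nat.count_succ, if_pos hb2]
        have h2 : Nat.count P (b+1) ≤ Nat.count P n := Nat.count_monotone P hbn
        omega
      · rw [hseq, Nat.nth_count hb2, hb3]

end SLLNAux

namespace SLLNAux

variable (s : List Bool → Bool)

lemma prefixFn_succ (ω : ℕ → Bool) (n : ℕ) :
    prefixFn ω (n+1) = prefixFn ω n ++ [ω n] := by
  rw [prefixFn, List.ofFn_succ']
  simp [List.concat_eq_append, prefixFn]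

lemma persist {N : ℕ} {ω : ℕ → Bool} {n : ℕ} (h : cN s N (prefixFn ω n) = N) :
    cN s N (prefixFn ω (n+1)) = N ∧ tN s N (prefixFn ω (n+1)) = tN s N (prefixFn ω n) := by
  have hsel : ¬(s (prefixFn ω n) = true ∧ selC s (prefixFn ω n) < N) := by
    rintro ⟨-, hlt⟩
    have := cN_le_selC s N (prefixFn ω n)
    omega
  rw [prefixFn_succ]
  exact ⟨by rw [cN_append_inactive s N _ _ hsel, h],
    tN_append_inactive s N _ _ hsel⟩

/-- one-sided deviation set bound -/
lemma measure_DOne {p : ℝ} {μ : Measure (ℕ → Bool)} (hμ : IsBernoulliMeasure p μ)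
    (hp0 : 0 < p) (hp1 : p < 1) (N : ℕ) {ε : ℝ} (hε0 : 0 < ε) (hε1 : ε ≤ 1)
    {σ : ℝ} (hσ : σ = 1 ∨ σ = -1) :
    μ {ω | ∃ n, cN s N (prefixFn ω n) = N ∧
        ε * N ≤ σ * ((tN s N (prefixFn ω n) : ℝ) - p * N)}
      ≤ ENNReal.ofReal (Real.exp (-(ε^2 * N / 6))) := by
  set l : ℝ := σ * (ε / 3) with hldef
  have hl : |l| ≤ 1 := by
    rw [hldef, abs_mul]
    have h1 : |σ| = 1 := by rcases hσ with h | h <;> simp [h]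
    have h2 : |ε / 3| ≤ 1 := by rw [abs_of_nonneg (by linarith)]; linarith
    rw [h1, one_mul]; exact h2
  set a : ℝ := ε^2 * N / 6 with hadef
  set E : ℕ → Set (ℕ → Bool) := fun n => {ω | cN s N (prefixFn ω n) = N ∧
      ε * N ≤ σ * ((tN s N (prefixFn ω n) : ℝ) - p * N)} with hEdef
  have hunion : {ω | ∃ n, cN s N (prefixFn ω n) = N ∧
      ε * N ≤ σ * ((tN s N (prefixFn ω n) : ℝ) - p * N)} = ⋃ n, E n := by
    ext ω; simp [hEdef]
  have hmono : Monotone E := by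
    apply monotone_nat_of_le_succ
    intro n ω hω
    obtain ⟨h1, h2⟩ := persist s hω.1
    exact ⟨h1, by rw [h2]; exact hω.2⟩
  have hEbound : ∀ n, μ (E n) ≤ ENNReal.ofReal (Real.exp (-a)) := by
    intro n
    refine le_trans (measure_mono ?_) (measure_mart_ge s hμ hp0 hp1 hl N n a)
    intro ω hω
    obtain ⟨hc, ht⟩ := hω
    show ENNReal.ofReal (Real.exp a) ≤ mart s p l N (prefixFn ω n)
    rw [mart, hc]
    apply ENNReal.ofReal_le_ofReal
    apply Real.exp_le_exp.mpr
    have hexp : l * ((tN s N (prefixFn ω n) : ℝ) - p * N)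
        = (ε / 3) * (σ * ((tN s N (prefixFn ω n) : ℝ) - p * N)) := by
      rw [hldef]; ring
    have hl2 : l^2 = (ε/3)^2 := by
      rw [hldef, mul_pow]
      have : σ^2 = 1 := by rcases hσ with h | h <;> rw [h] <;> norm_num
      rw [this, one_mul]
    have h5 : (ε / 3) * (ε * N) ≤ (ε / 3) * (σ * ((tN s N (prefixFn ω n) : ℝ) - p * N)) :=
      mul_le_mul_of_nonneg_left ht (by linarith)
    rw [hexp, hl2, hadef]
    nlinarith [h5]
  rw [hunion, hmono.measure_iUnion]
  exact iSup_le hEbound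

end SLLNAux

namespace SLLNAux

variable (s : List Bool → Bool)

lemma measure_DSet {p : ℝ} {μ : Measure (ℕ → Bool)} (hμ : IsBernoulliMeasure p μ)
    (hp0 : 0 < p) (hp1 : p < 1) (N : ℕ) {ε : ℝ} (hε0 : 0 < ε) (hε1 : ε ≤ 1) :
    μ {ω | ∃ n, cN s N (prefixFn ω n) = N ∧
        ε * N ≤ |(tN s N (prefixFn ω n) : ℝ) - p * N|}
      ≤ 2 * ENNReal.ofReal (Real.exp (-(ε^2 * N / 6))) := by
  have hsub : {ω | ∃ n, cN s N (prefixFn ω n) = N ∧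
        ε * N ≤ |(tN s N (prefixFn ω n) : ℝ) - p * N|}
      ⊆ {ω | ∃ n, cN s N (prefixFn ω n) = N ∧
          ε * N ≤ (1:ℝ) * ((tN s N (prefixFn ω n) : ℝ) - p * N)}
        ∪ {ω | ∃ n, cN s N (prefixFn ω n) = N ∧
          ε * N ≤ (-1:ℝ) * ((tN s N (prefixFn ω n) : ℝ) - p * N)} := by
    rintro ω ⟨n, hc, ht⟩
    rcases le_abs.mp ht with h | h
    · exact Or.inl ⟨n, hc, by linarith⟩
    · exact Or.inr ⟨n, hc, by linarith⟩
  calc μ _ ≤ μ (_ ∪ _) := measure_mono hsub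
    _ ≤ _ + _ := measure_union_le _ _
    _ ≤ ENNReal.ofReal (Real.exp (-(ε^2 * N / 6)))
        + ENNReal.ofReal (Real.exp (-(ε^2 * N / 6))) :=
      add_le_add (measure_DOne s hμ hp0 hp1 N hε0 hε1 (Or.inl rfl))
        (measure_DOne s hμ hp0 hp1 N hε0 hε1 (Or.inr rfl))
    _ = 2 * ENNReal.ofReal (Real.exp (-(ε^2 * N / 6))) := (two_mul _).symm

lemma measure_limsup_DSet {p : ℝ} {μ : Measure (ℕ → Bool)} (hμ : IsBernoulliMeasure p μ)
    (hp0 : 0 < p) (hp1 : p < 1) {ε : ℝ} (hε0 : 0 < ε) (hε1 : ε ≤ 1) :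
    μ (limsup (fun N => {ω | ∃ n, cN s N (prefixFn ω n) = N ∧
        ε * N ≤ |(tN s N (prefixFn ω n) : ℝ) - p * N|}) atTop) = 0 := by
  apply measure_limsup_atTop_eq_zero
  set r : ℝ≥0∞ := ENNReal.ofReal (Real.exp (-(ε^2 / 6))) with hr
  have hrlt : r < 1 := by
    rw [hr]
    apply ENNReal.ofReal_lt_one.mpr
    apply Real.exp_lt_one_iff.mpr
    nlinarith [pow_pos hε0 2]
  have hterm : ∀ N : ℕ, μ {ω | ∃ n, cN s N (prefixFn ω n) = N ∧
      ε * N ≤ |(tN s N (prefixFn ω n) : ℝ) - p * N|} ≤ 2 * r ^ N := by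
    intro N
    refine le_trans (measure_DSet s hμ hp0 hp1 N hε0 hε1) ?_
    have : ENNReal.ofReal (Real.exp (-(ε^2 * N / 6))) = r ^ N := by
      rw [hr, ← ENNReal.ofReal_pow (Real.exp_nonneg _), ← Real.exp_nat_mul]
      congr 1
      ring
    rw [this]
  have hsum : (∑' N : ℕ, (2 : ℝ≥0∞) * r ^ N) ≠ ⊤ := by
    rw [ENNReal.tsum_mul_left, ENNReal.tsum_geometric]
    apply ENNReal.mul_ne_top ENNReal.ofNat_ne_top
    apply ENNReal.inv_ne_top.mpr
    intro h0
    exact absurd (tsub_eq_zero_iff_le.mp h0) (not_le.mpr hrlt)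
  exact ne_top_of_le_ne_top hsum (ENNReal.tsum_le_tsum hterm)

end SLLNAux


/-- **Strong law of large numbers for selected subsequences.** For every selection rule
`s` and `p ∈ (0,1)`, the sequences whose `s`-selected subsequence is infinite but does
not have limit frequency `p` form a Bernoulli(`p`)-null set. -/
theorem slln_selected_subsequence (s : List Bool → Bool) (p : ℝ)
    (hp0 : 0 < p) (hp1 : p < 1)
    (μ : Measure (ℕ → Bool)) (hμ : IsBernoulliMeasure p μ) :
    μ {ω : ℕ → Bool | (SelectedIndices s ω).Infinite ∧
      ¬ LimitFreq (SelectedSeq s ω) p} = 0 := by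
  classical
  have hkey : ∀ m : ℕ, μ (limsup (fun N => {ω | ∃ n, SLLNAux.cN s N (prefixFn ω n) = N ∧
      (1/((m:ℝ)+1)) * N ≤ |(SLLNAux.tN s N (prefixFn ω n) : ℝ) - p * N|}) atTop) = 0 := by
    intro m
    have hm0 : (0:ℝ) < 1/((m:ℝ)+1) := by positivity
    have hm1 : (1:ℝ)/((m:ℝ)+1) ≤ 1 := by
      rw [div_le_one (by positivity)]
      simp
    exact SLLNAux.measure_limsup_DSet s hμ hp0 hp1 hm0 hm1
  apply measure_mono_null ?_ (measure_iUnion_null fun m => hkey m)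
  intro ω hω
  obtain ⟨hinf, hnl⟩ := hω
  rw [LimitFreq, Metric.tendsto_atTop] at hnl
  push_neg at hnl
  obtain ⟨ε, hε, hfreq⟩ := hnl
  obtain ⟨m, hm⟩ := exists_nat_one_div_lt hε
  refine Set.mem_iUnion.mpr ⟨m, ?_⟩
  rw [Filter.mem_limsup_iff_frequently_mem, Filter.frequently_atTop]
  intro N₀
  obtain ⟨N, hN1, hN2⟩ := hfreq (max N₀ 1)
  refine ⟨N, le_trans (le_max_left _ _) hN1, ?_⟩
  have hNpos : 1 ≤ N := le_trans (le_max_right _ _) hN1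
  obtain ⟨n, hc, ht⟩ := SLLNAux.bridge s ω hinf hNpos
  refine ⟨n, hc, ?_⟩
  rw [ht]
  have hNR : (0:ℝ) < N := by exact_mod_cast hNpos
  rw [Real.dist_eq] at hN2
  set T : ℝ := (((Finset.range N).filter fun k => SelectedSeq s ω k = true).card : ℝ) with hT
  have habs : |T / N - p| * N = |T - p * N| := by
    rw [← abs_of_pos hNR, ← abs_mul]
    congr 1
    field_simp
    rw [abs_of_pos hNR]
    ring
  calc (1/((m:ℝ)+1)) * N ≤ ε * N := mul_le_mul_of_nonneg_right hm.le hNR.le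
    _ ≤ |T/N - p| * N := mul_le_mul_of_nonneg_right hN2 hNR.le
    _ = |T - p*N| := habs
end

section
/- The set of Martin-Löf random sequences has measure 1 under the uniform measure on the Cantor space ℕ → Bool; equivalently, the union of all effectively null sets is a null set for the uniform measure. -/
open Filter MeasureTheory Set
open scoped ENNReal

open Encodable in
lemma countable_setOf_computable {α β : Type} [Primcodable α] [Primcodable β] :
    Set.Countable {f : α → β | Computable f} := by
  classical
  have key : ∀ f : {f : α → β // Computable f}, ∃ c : Nat.Partrec.Code,
      ∀ a : α, c.eval (encode a) = Part.some (encode (f.1 a)) := by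
    rintro ⟨f, hf⟩
    obtain ⟨c, hc⟩ := Nat.Partrec.Code.exists_code.1 hf
    refine ⟨c, fun a => ?_⟩
    have := congrFun hc (encode a)
    simp [encodek] at this
    simpa using this
  choose F hF using key
  have hFinj : Function.Injective F := by
    rintro f g h
    have : ∀ a, Part.some (encode (f.1 a)) = Part.some (encode (g.1 a)) := by
      intro a
      rw [← hF f a, ← hF g a, h]
    ext1; funext a
    have := Part.some_injective (this a)
    exact encode_injective this
  refine Set.countable_iff_exists_injective.2
    ⟨fun f => encode (F ⟨f.1, f.2⟩), fun f g h => ?_⟩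
  have := hFinj (encode_injective h)
  ext1
  exact congrArg Subtype.val this

lemma countable_setOf_computable2 :
    Set.Countable {g : ℕ → ℕ → Option (List Bool) | Computable₂ g} := by
  have hinj : Function.Injective
      (fun (g : ℕ → ℕ → Option (List Bool)) (p : ℕ × ℕ) => g p.1 p.2) := by
    intro g g' h
    funext n m
    exact congrFun h (n, m)
  have : {g : ℕ → ℕ → Option (List Bool) | Computable₂ g} =
      (fun (g : ℕ → ℕ → Option (List Bool)) (p : ℕ × ℕ) => g p.1 p.2) ⁻¹'
        {f : ℕ × ℕ → Option (List Bool) | Computable f} := rfl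
  rw [this]
  exact (countable_setOf_computable).preimage hinj

/-- The set of Martin-Löf random sequences has uniform measure `1`; equivalently, the
union of all effectively null sets (the set of non-random sequences) is a null set. -/
theorem mlrandom_measure_one (μ : Measure (ℕ → Bool)) (hμ : IsUniformMeasure μ) :
    μ {ω : ℕ → Bool | MLRandom ω} = 1 ∧ μ {ω : ℕ → Bool | ¬ MLRandom ω} = 0 := by
  classical
  have hcylnil : cyl ([] : List Bool) = Set.univ := by
    ext ω; simp [cyl, prefixFn]
  have huniv : μ Set.univ = 1 := by
    have h := hμ []
    rw [hcylnil] at h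
    simpa using h
  set G : Set (ℕ → ℕ → Option (List Bool)) :=
    {g | Computable₂ g ∧ ∀ k : ℕ,
      (∑' n : ℕ, ((g k n).elim 0 fun w => ((2 : ℝ≥0∞) ^ w.length)⁻¹)) ≤
        ((2 : ℝ≥0∞) ^ k)⁻¹} with hG
  have hGc : G.Countable :=
    countable_setOf_computable2.mono (fun g hg => hg.1)
  have hsub : {ω : ℕ → Bool | ¬ MLRandom ω} ⊆
      ⋃ g ∈ G, ⋂ k : ℕ, ⋃ n : ℕ, ⋃ w ∈ g k n, cyl w := by
    intro ω hω
    simp only [Set.mem_setOf_eq, MLRandom, not_forall] at hω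
    obtain ⟨X, hEN, hmem'⟩ := hω
    obtain ⟨g, hgc, hg⟩ := hEN
    have hmem : ω ∈ X := not_not.1 hmem'
    refine Set.mem_biUnion (show g ∈ G from ⟨hgc, fun k => (hg k).2⟩) ?_
    exact Set.mem_iInter.2 fun k => (hg k).1 hmem
  have hnull : μ {ω : ℕ → Bool | ¬ MLRandom ω} = 0 := by
    refine measure_mono_null hsub ?_
    rw [measure_biUnion_null_iff hGc]
    intro g hg
    have hk : ∀ k : ℕ, μ (⋂ k' : ℕ, ⋃ n : ℕ, ⋃ w ∈ g k' n, cyl w) ≤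
        ((2 : ℝ≥0∞) ^ k)⁻¹ := by
      intro k
      refine (measure_mono (Set.iInter_subset _ k)).trans ?_
      refine (measure_iUnion_le _).trans ?_
      refine le_trans (ENNReal.tsum_le_tsum fun n => ?_) (hg.2 k)
      cases h : g k n with
      | none => simp
      | some w => simp [hμ w]
    by_contra hne
    obtain ⟨k, hk'⟩ := ENNReal.exists_inv_two_pow_lt hne
    have h2 : ((2 : ℝ≥0∞)⁻¹) ^ k = ((2 : ℝ≥0∞) ^ k)⁻¹ := by
      rw [ENNReal.inv_pow]
    exact absurd ((hk k).trans_lt (h2 ▸ hk')) (lt_irrefl _)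
  refine ⟨?_, hnull⟩
  have hle : μ {ω : ℕ → Bool | MLRandom ω} ≤ 1 := huniv ▸ measure_mono (Set.subset_univ _)
  have hge : (1 : ℝ≥0∞) ≤ μ {ω : ℕ → Bool | MLRandom ω} := by
    have hcover : (Set.univ : Set (ℕ → Bool)) ⊆
        {ω : ℕ → Bool | MLRandom ω} ∪ {ω : ℕ → Bool | ¬ MLRandom ω} := by
      intro ω _
      by_cases h : MLRandom ω
      · exact Or.inl h
      · exact Or.inr h
    calc (1 : ℝ≥0∞) = μ Set.univ := huniv.symm
      _ ≤ μ ({ω : ℕ → Bool | MLRandom ω} ∪ {ω : ℕ → Bool | ¬ MLRandom ω}) :=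
          measure_mono hcover
      _ ≤ μ {ω : ℕ → Bool | MLRandom ω} + μ {ω : ℕ → Bool | ¬ MLRandom ω} :=
          measure_union_le _ _
      _ = μ {ω : ℕ → Bool | MLRandom ω} := by rw [hnull, add_zero]
  exact le_antisymm hle hge
end
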